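/- Let Σ be a d×d real symmetric positive semidefinite matrix, Σ̃ a d×d real symmetric positive definite matrix, μ, μ̃ ∈ ℝ^d, and ν a probability measure on ℝ^d with square-integrable identity map, mean μ̃, and covariance matrix Σ̃. Then the quantity ‖μ − μ̃‖² + tr(Σ) + tr(Σ̃) − 2·tr((Σ̃^{1/2}·Σ·Σ̃^{1/2})^{1/2}) is the minimum of ∫ ‖x − y‖² dπ(x,y) over all probability measures π on ℝ^d × ℝ^d with square-integrable coordinates whose second marginal equals ν and whose first marginal has mean μ and covariance matrix Σ; moreover this minimum is attained by the coupling π = (y ↦ (μ + P·(y − μ̃), y))_*ν, where P = Σ̃^{−1/2}·(Σ̃^{1/2}·Σ·Σ̃^{1/2})^{1/2}·Σ̃^{−1/2} is the optimal transport map matrix. -/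

import Mathlib

open MeasureTheory Matrix
open scoped Classical

/-- The unique positive semidefinite square root of a positive semidefinite real matrix
(junk value `0` if the matrix is not positive semidefinite). -/
noncomputable def psdSqrt {d : ℕ} (A : Matrix (Fin d) (Fin d) ℝ) : Matrix (Fin d) (Fin d) ℝ :=
  if h : A.PosSemidef then (open scoped MatrixOrder in CFC.sqrt A) else 0

/-- The optimal transport map matrix `P = Σ̃^{-1/2} (Σ̃^{1/2} Σ Σ̃^{1/2})^{1/2} Σ̃^{-1/2}`. -/
noncomputable def otMap {d : ℕ} (S St : Matrix (Fin d) (Fin d) ℝ) :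
    Matrix (Fin d) (Fin d) ℝ :=
  (psdSqrt St)⁻¹ * psdSqrt (psdSqrt St * S * psdSqrt St) * (psdSqrt St)⁻¹

namespace OTAux

variable {d : ℕ} {A S St : Matrix (Fin d) (Fin d) ℝ}

lemma psdSqrt_def (h : A.PosSemidef) : psdSqrt A = (open scoped MatrixOrder in CFC.sqrt A) :=
  dif_pos h

lemma psdSqrt_posSemidef (h : A.PosSemidef) : (psdSqrt A).PosSemidef := by
  rw [psdSqrt_def h]; exact (open scoped MatrixOrder in (CFC.sqrt_nonneg A).posSemidef)

lemma psdSqrt_mul_self (h : A.PosSemidef) : psdSqrt A * psdSqrt A = A := by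
  rw [psdSqrt_def h]; exact (open scoped MatrixOrder in CFC.sqrt_mul_sqrt_self A h.nonneg)

lemma psdSqrt_herm (h : A.PosSemidef) : (psdSqrt A)ᴴ = psdSqrt A :=
  (psdSqrt_posSemidef h).isHermitian

lemma psdSqrt_transpose (h : A.PosSemidef) : (psdSqrt A)ᵀ = psdSqrt A := by
  have := psdSqrt_herm h
  simpa [Matrix.conjTranspose_eq_transpose_of_trivial] using this

lemma psdSqrt_posDef (h : A.PosDef) : (psdSqrt A).PosDef := by
  refine PosDef.of_dotProduct_mulVec_pos (psdSqrt_posSemidef h.posSemidef).isHermitian fun x hx => ?_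
  rcases lt_or_eq_of_le ((psdSqrt_posSemidef h.posSemidef).dotProduct_mulVec_nonneg x) with hlt | heq
  · exact hlt
  · exfalso
    have h0 : psdSqrt A *ᵥ x = 0 :=
      ((psdSqrt_posSemidef h.posSemidef).dotProduct_mulVec_zero_iff x).mp heq.symm
    have hAx : A *ᵥ x = 0 := by
      rw [← psdSqrt_mul_self h.posSemidef, ← Matrix.mulVec_mulVec, h0, Matrix.mulVec_zero]
    have := h.dotProduct_mulVec_pos hx
    rw [hAx] at this
    simp at this

lemma diag_nonneg (h : A.PosSemidef) (i : Fin d) : 0 ≤ A i i := by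
  have := h.dotProduct_mulVec_nonneg (Pi.single i 1)
  simpa [dotProduct, Matrix.mulVec, Pi.single_apply, Finset.mul_sum] using this

lemma trace_nonneg (h : A.PosSemidef) : 0 ≤ A.trace := by
  rw [Matrix.trace]
  exact Finset.sum_nonneg fun i _ => diag_nonneg h i

lemma trace_mul_nonneg {B : Matrix (Fin d) (Fin d) ℝ} (hA : A.PosSemidef) (hB : B.PosSemidef) :
    0 ≤ (A * B).trace := by
  have hs : B = psdSqrt B * psdSqrt B := (psdSqrt_mul_self hB).symm
  have h1 : (A * B).trace = (psdSqrt B * A * psdSqrt B).trace := by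
    conv_lhs => rw [hs, ← Matrix.mul_assoc]
    rw [Matrix.trace_mul_cycle]
  rw [h1]
  have hherm : (psdSqrt B)ᴴ = psdSqrt B := psdSqrt_herm hB
  have := hA.conjTranspose_mul_mul_same (psdSqrt B)
  rw [hherm] at this
  exact trace_nonneg this

lemma QSQ_posSemidef (hS : S.PosSemidef) (hSt : St.PosDef) :
    (psdSqrt St * S * psdSqrt St).PosSemidef := by
  have := hS.conjTranspose_mul_mul_same (psdSqrt St)
  rwa [psdSqrt_herm hSt.posSemidef] at this

lemma Q_det_isUnit (hSt : St.PosDef) : IsUnit (psdSqrt St).det :=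
  isUnit_iff_ne_zero.mpr (psdSqrt_posDef hSt).det_pos.ne'

lemma otMap_transpose (hS : S.PosSemidef) (hSt : St.PosDef) : (otMap S St)ᵀ = otMap S St := by
  unfold otMap
  rw [Matrix.transpose_mul, Matrix.transpose_mul, Matrix.transpose_nonsing_inv,
    psdSqrt_transpose hSt.posSemidef, psdSqrt_transpose (QSQ_posSemidef hS hSt)]
  simp only [Matrix.mul_assoc]

private lemma conj_alg (Q Mm S' St' : Matrix (Fin d) (Fin d) ℝ) (hdet : IsUnit Q.det)
    (hMM : Mm * Mm = Q * S' * Q) (hQQ : Q * Q = St') :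
    (Q⁻¹ * Mm * Q⁻¹) * St' * (Q⁻¹ * Mm * Q⁻¹) = S' := by
  rw [← hQQ]
  simp only [Matrix.mul_assoc]
  rw [Matrix.nonsing_inv_mul_cancel_left _ _ hdet, Matrix.mul_nonsing_inv_cancel_left _ _ hdet,
    ← Matrix.mul_assoc Mm Mm, hMM]
  simp only [Matrix.mul_assoc]
  rw [Matrix.mul_nonsing_inv _ hdet, Matrix.mul_one,
    Matrix.nonsing_inv_mul_cancel_left _ _ hdet]

lemma otMap_St_otMap (hS : S.PosSemidef) (hSt : St.PosDef) :
    otMap S St * St * otMap S St = S :=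
  conj_alg _ _ _ _ (Q_det_isUnit hSt) (psdSqrt_mul_self (QSQ_posSemidef hS hSt))
    (psdSqrt_mul_self hSt.posSemidef)

private lemma trace_alg (Q Mm St' : Matrix (Fin d) (Fin d) ℝ) (hdet : IsUnit Q.det)
    (hQQ : Q * Q = St') :
    ((Q⁻¹ * Mm * Q⁻¹) * St').trace = Mm.trace := by
  rw [← hQQ]
  simp only [Matrix.mul_assoc]
  rw [Matrix.nonsing_inv_mul_cancel_left _ _ hdet, ← Matrix.mul_assoc,
    Matrix.trace_mul_cycle, Matrix.mul_nonsing_inv _ hdet, Matrix.one_mul]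

lemma trace_otMap_St (hS : S.PosSemidef) (hSt : St.PosDef) :
    (otMap S St * St).trace = (psdSqrt (psdSqrt St * S * psdSqrt St)).trace :=
  trace_alg _ _ _ (Q_det_isUnit hSt) (psdSqrt_mul_self hSt.posSemidef)

lemma posDef_of_det (h : A.PosSemidef) (hdet : A.det ≠ 0) : A.PosDef := by
  refine PosDef.of_dotProduct_mulVec_pos h.isHermitian fun x hx => ?_
  rcases lt_or_eq_of_le (h.dotProduct_mulVec_nonneg x) with hlt | heq
  · exact hlt
  · exfalso
    have h0 : A *ᵥ x = 0 := (h.dotProduct_mulVec_zero_iff x).mp heq.symm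
    have hx0 : x = 0 := by
      have := congrArg (fun v => A⁻¹ *ᵥ v) h0
      simpa [Matrix.mulVec_mulVec, Matrix.nonsing_inv_mul _ (isUnit_iff_ne_zero.mpr hdet),
        Matrix.one_mulVec] using this
    exact hx hx0

lemma trace_eps_bound (hS : S.PosSemidef) (hSt : St.PosDef) {ε : ℝ} (hε : 0 < ε) :
    ∃ X : Matrix (Fin d) (Fin d) ℝ, X.PosDef ∧
      (X * S).trace + (X⁻¹ * St).trace
        ≤ 2 * (psdSqrt (psdSqrt St * S * psdSqrt St)).trace + ε * d := by
  set Q := psdSqrt St with hQdef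
  set M := psdSqrt (Q * S * Q) with hMdef
  have hM : M.PosSemidef := psdSqrt_posSemidef (QSQ_posSemidef hS hSt)
  have hMM : M * M = Q * S * Q := psdSqrt_mul_self (QSQ_posSemidef hS hSt)
  have hQQ : Q * Q = St := psdSqrt_mul_self hSt.posSemidef
  have hQdet : IsUnit Q.det := Q_det_isUnit hSt
  set Mε := M + ε • (1 : Matrix (Fin d) (Fin d) ℝ) with hMεdef
  have hεone : (ε • (1 : Matrix (Fin d) (Fin d) ℝ)).PosDef := by
    rw [Matrix.smul_one_eq_diagonal]
    exact Matrix.PosDef.diagonal fun _ => hε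
  have hMε : Mε.PosDef := Matrix.PosDef.posSemidef_add hM hεone
  have hMεinv : Mε⁻¹.PosDef := hMε.inv
  have hMεdet : IsUnit Mε.det := isUnit_iff_ne_zero.mpr hMε.det_pos.ne'
  have hMεinvdet : IsUnit Mε⁻¹.det := isUnit_iff_ne_zero.mpr hMεinv.det_pos.ne'
  refine ⟨Q * Mε⁻¹ * Q, ?_, ?_⟩
  · apply posDef_of_det
    · have := hMεinv.posSemidef.conjTranspose_mul_mul_same Q
      rwa [psdSqrt_herm hSt.posSemidef] at this
    · simp only [Matrix.det_mul]
      exact mul_ne_zero (mul_ne_zero hQdet.ne_zero hMεinvdet.ne_zero) hQdet.ne_zero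
  · have hXinv : (Q * Mε⁻¹ * Q)⁻¹ = Q⁻¹ * Mε * Q⁻¹ := by
      rw [Matrix.mul_inv_rev, Matrix.mul_inv_rev, Matrix.nonsing_inv_nonsing_inv _ hMεdet,
        Matrix.mul_assoc]
    have h2 : ((Q * Mε⁻¹ * Q)⁻¹ * St).trace = M.trace + ε * d := by
      rw [hXinv, trace_alg Q Mε St hQdet hQQ, hMεdef, Matrix.trace_add, Matrix.trace_smul,
        Matrix.trace_one]
      simp [smul_eq_mul]
    have h1 : ((Q * Mε⁻¹ * Q) * S).trace ≤ M.trace := by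
      have hcyc : ((Q * Mε⁻¹ * Q) * S).trace = (Mε⁻¹ * (M * M)).trace := by
        rw [hMM, Matrix.mul_assoc (Q * Mε⁻¹) Q S, Matrix.trace_mul_comm (Q * Mε⁻¹) (Q * S),
          ← Matrix.mul_assoc, Matrix.trace_mul_comm (Q * S * Q) Mε⁻¹]
      rw [hcyc]
      have hcancel : Mε⁻¹ * (Mε * M) = M := Matrix.nonsing_inv_mul_cancel_left _ _ hMεdet
      have hMεM : Mε * M = M * M + ε • M := by
        rw [hMεdef, Matrix.add_mul, Matrix.smul_mul, Matrix.one_mul]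
      rw [hMεM] at hcancel
      have htr : (Mε⁻¹ * (M * M)).trace + ε * (Mε⁻¹ * M).trace = M.trace := by
        have := congrArg Matrix.trace hcancel
        rw [Matrix.mul_add, Matrix.trace_add, Matrix.mul_smul, Matrix.trace_smul] at this
        simpa [smul_eq_mul] using this
      have hnn : 0 ≤ ε * (Mε⁻¹ * M).trace :=
        mul_nonneg hε.le (trace_mul_nonneg hMεinv.posSemidef hM)
      linarith
    linarith

/-! ### Analytic auxiliary lemmas -/

variable {α : Type*} [MeasurableSpace α] {m : Measure α}

lemma memL2_coord {f : α → EuclideanSpace ℝ (Fin d)} (hf : MemLp f 2 m) (i : Fin d) :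
    MemLp (fun a => f a i) 2 m := by
  have := (EuclideanSpace.proj (𝕜 := ℝ) i).comp_memLp' hf
  exact this

lemma integrable_mul_L2 {f g : α → ℝ} (hf : MemLp f 2 m) (hg : MemLp g 2 m) :
    Integrable (fun a => f a * g a) m := by
  have h : MemLp (f • g) 1 m := hg.smul hf
  rw [memLp_one_iff_integrable] at h
  exact h

lemma memL2_sumcomb {f : α → EuclideanSpace ℝ (Fin d)} (hf : MemLp f 2 m)
    (c : Fin d → ℝ) : MemLp (fun a => ∑ k, c k * f a k) 2 m := by
  have : ∀ k ∈ Finset.univ, MemLp (fun a => c k * f a k) 2 m := fun k _ =>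
    (memL2_coord hf k).const_mul (c k)
  have h := memLp_finset_sum' Finset.univ this
  convert h using 1
  ext a
  simp

variable [IsProbabilityMeasure m]

lemma int_comb_mul {f : α → EuclideanSpace ℝ (Fin d)} (hf : MemLp f 2 m)
    {Sig : Matrix (Fin d) (Fin d) ℝ} (hSig : ∀ i j, (∫ a, f a i * f a j ∂m) = Sig i j)
    (A B : Matrix (Fin d) (Fin d) ℝ) (i j : Fin d) :
    (∫ a, (∑ k, A i k * f a k) * (∑ l, B j l * f a l) ∂m) = (A * Sig * Bᵀ) i j := by
  have hint : ∀ (k l : Fin d),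
      Integrable (fun a => (A i k * B j l) * (f a k * f a l)) m :=
    fun k l => (integrable_mul_L2 (memL2_coord hf k)
      (memL2_coord hf l)).const_mul _
  have h1 : (∫ a, (∑ k, A i k * f a k) * (∑ l, B j l * f a l) ∂m)
      = ∫ a, ∑ k, ∑ l, (A i k * B j l) * (f a k * f a l) ∂m := by
    congr 1
    funext a
    rw [Finset.sum_mul_sum]
    refine Finset.sum_congr rfl fun k _ => Finset.sum_congr rfl fun l _ => by ring
  rw [h1, integral_finset_sum _ (fun k _ => integrable_finset_sum _ (fun l _ => hint k l))]
  have h2 : ∀ k, (∫ a, ∑ l, (A i k * B j l) * (f a k * f a l) ∂m)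
      = ∑ l, (A i k * B j l) * Sig k l := by
    intro k
    rw [integral_finset_sum _ (fun l _ => hint k l)]
    refine Finset.sum_congr rfl fun l _ => ?_
    rw [MeasureTheory.integral_const_mul, hSig k l]
  simp_rw [h2]
  rw [Matrix.mul_apply]
  rw [Finset.sum_comm]
  refine Finset.sum_congr rfl fun l _ => ?_
  rw [Matrix.mul_apply, Matrix.transpose_apply, Finset.sum_mul]
  refine Finset.sum_congr rfl fun k _ => by ring

lemma sum_int_comb {f : α → EuclideanSpace ℝ (Fin d)} (hf : MemLp f 2 m)
    {Sig : Matrix (Fin d) (Fin d) ℝ} (hSig : ∀ i j, (∫ a, f a i * f a j ∂m) = Sig i j)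
    (A : Matrix (Fin d) (Fin d) ℝ) :
    (∑ i, ∫ a, (∑ k, A i k * f a k) * (∑ k, A i k * f a k) ∂m) = (A * Sig * Aᵀ).trace := by
  rw [Matrix.trace]
  exact Finset.sum_congr rfl fun i _ => int_comb_mul hf hSig A A i i

lemma expand_one {a b : α → ℝ} (ha : MemLp a 2 m) (hb : MemLp b 2 m) (c : ℝ)
    (ha0 : (∫ x, a x ∂m) = 0) (hb0 : (∫ x, b x ∂m) = 0) :
    (∫ x, (c + a x - b x)^2 ∂m)
      = c^2 + (∫ x, a x * a x ∂m) + (∫ x, b x * b x ∂m) - 2 * ∫ x, a x * b x ∂m := by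
  have iaa := integrable_mul_L2 ha ha
  have ibb := integrable_mul_L2 hb hb
  have iab := integrable_mul_L2 ha hb
  have ia := ha.integrable one_le_two
  have ib := hb.integrable one_le_two
  have hpt : ∀ x, (c + a x - b x)^2
      = (((((a x * a x) + (b x * b x)) - 2*(a x * b x)) + (2*c)*(a x)) - (2*c)*(b x)) + c^2 :=
    fun x => by ring
  simp_rw [hpt]
  have I1 : Integrable (fun x => a x * a x + b x * b x) m := by exact iaa.add ibb
  have I2 : Integrable (fun x => a x * a x + b x * b x - 2 * (a x * b x)) m := by
    exact I1.sub (iab.const_mul 2)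
  have I3 : Integrable (fun x => a x * a x + b x * b x - 2 * (a x * b x) + 2 * c * a x) m := by
    exact I2.add (ia.const_mul (2*c))
  have I4 : Integrable
      (fun x => a x * a x + b x * b x - 2 * (a x * b x) + 2 * c * a x - 2 * c * b x) m := by
    exact I3.sub (ib.const_mul (2*c))
  have I5 : Integrable (fun x => 2 * (a x * b x)) m := by exact iab.const_mul 2
  have I6 : Integrable (fun x => 2 * c * a x) m := by exact ia.const_mul (2*c)
  have I7 : Integrable (fun x => 2 * c * b x) m := by exact ib.const_mul (2*c)
  rw [integral_add I4 (integrable_const _), integral_sub I3 I7, integral_add I2 I6,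
    integral_sub I1 I5, integral_add iaa ibb, MeasureTheory.integral_const_mul,
    MeasureTheory.integral_const_mul, MeasureTheory.integral_const_mul, ha0, hb0, integral_const]
  simp [measure_univ]
  ring

lemma expand_two {a : α → ℝ} (ha : MemLp a 2 m) (c : ℝ) (ha0 : (∫ x, a x ∂m) = 0) :
    (∫ x, (c + a x)^2 ∂m) = c^2 + (∫ x, a x * a x ∂m) := by
  have iaa := integrable_mul_L2 ha ha
  have ia := ha.integrable one_le_two
  have hpt : ∀ x, (c + a x)^2 = ((a x * a x) + (2*c)*(a x)) + c^2 := fun x => by ring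
  simp_rw [hpt]
  have I6 : Integrable (fun x => 2 * c * a x) m := by exact ia.const_mul (2*c)
  have I1 : Integrable (fun x => a x * a x + 2 * c * a x) m := by exact iaa.add I6
  rw [integral_add I1 (integrable_const _), integral_add iaa I6,
    MeasureTheory.integral_const_mul, ha0, integral_const]
  simp [measure_univ]
  ring

omit [IsProbabilityMeasure m] in
lemma dot_conj (R : Matrix (Fin d) (Fin d) ℝ) (hRT : Rᵀ = R) (hRinv : R * R⁻¹ = 1)
    (x y : Fin d → ℝ) :
    (∑ i, (∑ k, R i k * x k) * (∑ k, R⁻¹ i k * y k)) = ∑ i, x i * y i := by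
  have h1 : (∑ i, (∑ k, R i k * x k) * (∑ k, R⁻¹ i k * y k))
      = (R *ᵥ x) ⬝ᵥ (R⁻¹ *ᵥ y) := by
    simp [dotProduct, Matrix.mulVec]
  rw [h1]
  have h2 : R *ᵥ x = x ᵥ* R := by
    conv_lhs => rw [← hRT]
    rw [Matrix.mulVec_transpose]
  rw [dotProduct_mulVec, h2, Matrix.vecMul_vecMul, hRinv, Matrix.vecMul_one]
  rfl

omit [IsProbabilityMeasure m] in
lemma norm_sq_eq (x : EuclideanSpace ℝ (Fin d)) : ‖x‖^2 = ∑ i, x i^2 := by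
  rw [PiLp.norm_sq_eq_of_L2]
  simp [sq_abs]

end OTAux

set_option maxHeartbeats 1000000 in
open OTAux in
/-- **Optimality of the affine transport coupling.** -/
theorem otMap_coupling_isLeast
    {d : ℕ}
    (S St : Matrix (Fin d) (Fin d) ℝ) (hS : S.PosSemidef) (hSt : St.PosDef)
    (μ μt : EuclideanSpace ℝ (Fin d))
    (ν : Measure (EuclideanSpace ℝ (Fin d))) [IsProbabilityMeasure ν]
    (hint : MemLp (fun y => y) 2 ν)
    (hmean : (∫ y, y ∂ν) = μt)
    (hcov : ∀ i j, (∫ y, (y i - μt i) * (y j - μt j) ∂ν) = St i j) :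
    IsLeast
      { c : ℝ | ∃ π : Measure (EuclideanSpace ℝ (Fin d) × EuclideanSpace ℝ (Fin d)),
          IsProbabilityMeasure π ∧
          MemLp (fun q => q.1) 2 π ∧ MemLp (fun q => q.2) 2 π ∧
          π.map Prod.snd = ν ∧
          (∫ q, q.1 ∂π) = μ ∧
          (∀ i j, (∫ q, (q.1 i - μ i) * (q.1 j - μ j) ∂π) = S i j) ∧
          c = ∫ q, ‖q.1 - q.2‖ ^ 2 ∂π }
      (‖μ - μt‖ ^ 2 + S.trace + St.trace
        - 2 * (psdSqrt (psdSqrt St * S * psdSqrt St)).trace) ∧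
    (∫ q, ‖q.1 - q.2‖ ^ 2
        ∂(ν.map (fun y => (μ + Matrix.toEuclideanLin (otMap S St) (y - μt), y)))) =
      ‖μ - μt‖ ^ 2 + S.trace + St.trace
        - 2 * (psdSqrt (psdSqrt St * S * psdSqrt St)).trace := by
  classical
  -- basic coordinate facts
  have hsubc : ∀ (x y : EuclideanSpace ℝ (Fin d)) (i : Fin d), (x - y) i = x i - y i :=
    fun _ _ _ => rfl
  have haddc : ∀ (x y : EuclideanSpace ℝ (Fin d)) (i : Fin d), (x + y) i = x i + y i :=
    fun _ _ _ => rfl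
  have hcoordLin : ∀ (A : Matrix (Fin d) (Fin d) ℝ) (x : EuclideanSpace ℝ (Fin d)) (i : Fin d),
      Matrix.toEuclideanLin A x i = ∑ k, A i k * x k := fun A x i => by
    simp [Matrix.toEuclideanLin_apply, Matrix.mulVec, dotProduct]
  -- facts about ν
  have hμtint : Integrable (fun y : EuclideanSpace ℝ (Fin d) => y) ν := hint.integrable one_le_two
  have hgν : MemLp (fun y : EuclideanSpace ℝ (Fin d) => y - μt) 2 ν :=
    hint.sub (memLp_const μt)
  have hcoordy : ∀ (i : Fin d), (∫ y, y i ∂ν) = μt i := by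
    intro i
    have h := (EuclideanSpace.proj (𝕜 := ℝ) i).integral_comp_comm hμtint
    rw [hmean] at h
    exact h
  have hzν : ∀ i, (∫ y, (y - μt) i ∂ν) = 0 := by
    intro i
    simp_rw [hsubc]
    rw [integral_sub ((memL2_coord hint i).integrable one_le_two) (integrable_const _),
      hcoordy i, integral_const]
    simp [measure_univ]
  have hcovν : ∀ i j, (∫ y, (y - μt) i * (y - μt) j ∂ν) = St i j := by
    intro i j
    simp_rw [hsubc]
    exact hcov i j
  -- the optimal map
  set P := otMap S St with hPdef
  have hPt : Pᵀ = P := otMap_transpose hS hSt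
  have hPStP : P * St * P = S := otMap_St_otMap hS hSt
  have hPSttr : (P * St).trace = (psdSqrt (psdSqrt St * S * psdSqrt St)).trace :=
    trace_otMap_St hS hSt
  set Dm := P - 1 with hDmdef
  have hDmT : Dmᵀ = Dm := by rw [hDmdef, Matrix.transpose_sub, hPt, Matrix.transpose_one]
  have hPcomp : MemLp (fun y : EuclideanSpace ℝ (Fin d) =>
      Matrix.toEuclideanLin P (y - μt)) 2 ν := by
    have hcomp := (LinearMap.toContinuousLinearMap (Matrix.toEuclideanLin P)).comp_memLp' hgν
    exact hcomp
  have hTcont : Continuous (fun y : EuclideanSpace ℝ (Fin d) =>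
      (μ + Matrix.toEuclideanLin P (y - μt), y)) := by
    refine Continuous.prodMk ?_ continuous_id
    exact continuous_const.add ((LinearMap.continuous_of_finiteDimensional _).comp
      (continuous_id.sub continuous_const))
  have hTmeas := hTcont.measurable
  -- pointwise identity for the transport cost
  have hsub : ∀ y : EuclideanSpace ℝ (Fin d),
      μ + Matrix.toEuclideanLin P (y - μt) - y
        = (μ - μt) + Matrix.toEuclideanLin Dm (y - μt) := by
    intro y
    have h0 : Matrix.toEuclideanLin Dm (y - μt)
        = Matrix.toEuclideanLin P (y - μt) - (y - μt) := by
      ext i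
      rw [hsubc, hcoordLin, hcoordLin, hDmdef]
      simp only [Matrix.sub_apply, Matrix.one_apply, sub_mul, Finset.sum_sub_distrib,
        ite_mul, one_mul, zero_mul]
      rw [Finset.sum_ite_eq Finset.univ i (fun k => (y - μt) k)]
      simp
    rw [h0]
    abel
  have hz2 : ∀ i : Fin d, (∫ y, ∑ k, Dm i k * (y - μt) k ∂ν) = 0 := by
    intro i
    rw [integral_finset_sum _
      (fun k _ => ((memL2_coord hgν k).integrable one_le_two).const_mul _)]
    exact Finset.sum_eq_zero fun k _ => by rw [MeasureTheory.integral_const_mul, hzν k, mul_zero]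
  have htrD : (Dm * St * Dmᵀ).trace
      = S.trace + St.trace - 2 * (psdSqrt (psdSqrt St * S * psdSqrt St)).trace := by
    rw [hDmT, hDmdef]
    have hexp : (P - 1) * St * (P - 1) = P * St * P - P * St - St * P + St := by noncomm_ring
    rw [hexp, Matrix.trace_add, Matrix.trace_sub, Matrix.trace_sub, hPStP,
      Matrix.trace_mul_comm St P, hPSttr]
    ring
  -- the value of the cost for the transport coupling
  have hval : (∫ q, ‖q.1 - q.2‖ ^ 2
        ∂(ν.map (fun y => (μ + Matrix.toEuclideanLin P (y - μt), y))))
      = ‖μ - μt‖ ^ 2 + S.trace + St.trace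
        - 2 * (psdSqrt (psdSqrt St * S * psdSqrt St)).trace := by
    rw [MeasureTheory.integral_map hTmeas.aemeasurable
      (f := fun q : EuclideanSpace ℝ (Fin d) × EuclideanSpace ℝ (Fin d) => ‖q.1 - q.2‖ ^ 2)
      (((continuous_fst.sub continuous_snd).norm.pow 2).aestronglyMeasurable)]
    have hptw : ∀ y : EuclideanSpace ℝ (Fin d),
        ‖(μ + Matrix.toEuclideanLin P (y - μt), y).1
            - (μ + Matrix.toEuclideanLin P (y - μt), y).2‖ ^ 2
          = ∑ i, ((μ - μt) i + ∑ k, Dm i k * (y - μt) k) ^ 2 := by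
      intro y
      show ‖μ + Matrix.toEuclideanLin P (y - μt) - y‖ ^ 2 = _
      rw [hsub y, norm_sq_eq]
      refine Finset.sum_congr rfl fun i _ => ?_
      rw [haddc, hcoordLin]
    simp_rw [hptw]
    have hintsq : ∀ i : Fin d, Integrable
        (fun y => ((μ - μt) i + ∑ k, Dm i k * (y - μt) k) ^ 2) ν := by
      intro i
      have hm : MemLp (fun y : EuclideanSpace ℝ (Fin d) =>
          (μ - μt) i + ∑ k, Dm i k * (y - μt) k) 2 ν :=
        (memLp_const ((μ - μt) i)).add (memL2_sumcomb hgν (Dm i))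
      have := integrable_mul_L2 hm hm
      simpa [pow_two] using this
    rw [integral_finset_sum _ (fun i _ => hintsq i)]
    have hone : ∀ i : Fin d, (∫ y, ((μ - μt) i + ∑ k, Dm i k * (y - μt) k) ^ 2 ∂ν)
        = ((μ - μt) i) ^ 2
          + ∫ y, (∑ k, Dm i k * (y - μt) k) * (∑ k, Dm i k * (y - μt) k) ∂ν :=
      fun i => expand_two (memL2_sumcomb hgν (Dm i)) _ (hz2 i)
    simp_rw [hone]
    rw [Finset.sum_add_distrib, sum_int_comb hgν hcovν Dm, htrD, ← norm_sq_eq]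
    ring
  refine ⟨⟨?_, ?_⟩, hval⟩
  · -- membership
    refine ⟨ν.map (fun y => (μ + Matrix.toEuclideanLin P (y - μt), y)),
      ?_, ?_, ?_, ?_, ?_, ?_, ?_⟩
    · exact Measure.isProbabilityMeasure_map hTmeas.aemeasurable
    · rw [memLp_map_measure_iff continuous_fst.aestronglyMeasurable hTmeas.aemeasurable]
      exact (memLp_const μ).add hPcomp
    · rw [memLp_map_measure_iff continuous_snd.aestronglyMeasurable hTmeas.aemeasurable]
      exact hint
    · rw [Measure.map_map measurable_snd hTmeas]
      have hid : (Prod.snd ∘ fun y : EuclideanSpace ℝ (Fin d) =>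
          (μ + Matrix.toEuclideanLin P (y - μt), y)) = id := rfl
      rw [hid, Measure.map_id]
    · rw [MeasureTheory.integral_map hTmeas.aemeasurable continuous_fst.aestronglyMeasurable]
      have h0 : (∫ y, Matrix.toEuclideanLin P (y - μt) ∂ν) = 0 := by
        have hg0 : (∫ y, y - μt ∂ν) = (0 : EuclideanSpace ℝ (Fin d)) := by
          rw [integral_sub hμtint (integrable_const μt), hmean, integral_const]
          simp [measure_univ]
        have hcc := (LinearMap.toContinuousLinearMap
          (Matrix.toEuclideanLin P)).integral_comp_comm (hgν.integrable one_le_two)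
        simp only [LinearMap.coe_toContinuousLinearMap'] at hcc
        rw [hcc, hg0, map_zero]
      rw [integral_add (integrable_const μ) (hPcomp.integrable one_le_two), h0, integral_const]
      simp [measure_univ]
    · intro i j
      rw [MeasureTheory.integral_map hTmeas.aemeasurable]
      · have hred : ∀ (y : EuclideanSpace ℝ (Fin d)) (i0 : Fin d),
            ((μ + Matrix.toEuclideanLin P (y - μt), y).1 i0 - μ i0)
              = ∑ k, P i0 k * (y - μt) k := by
          intro y i0
          show (μ + Matrix.toEuclideanLin P (y - μt)) i0 - μ i0 = _
          rw [haddc, hcoordLin]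
          ring
        simp_rw [hred]
        rw [int_comb_mul hgν hcovν P P i j, hPt, hPStP]
      · refine Continuous.aestronglyMeasurable ?_
        exact (((EuclideanSpace.proj (𝕜 := ℝ) i).continuous.comp continuous_fst).sub
          continuous_const).mul
          (((EuclideanSpace.proj (𝕜 := ℝ) j).continuous.comp continuous_fst).sub
          continuous_const)
    · exact hval.symm
  · -- lower bound
    rintro c ⟨π, hπ, h1, h2, hmap, hmeanπ, hcovπ, rfl⟩
    haveI := hπ
    have hf : MemLp (fun q : EuclideanSpace ℝ (Fin d) × EuclideanSpace ℝ (Fin d) =>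
        q.1 - μ) 2 π := h1.sub (memLp_const μ)
    have hg : MemLp (fun q : EuclideanSpace ℝ (Fin d) × EuclideanSpace ℝ (Fin d) =>
        q.2 - μt) 2 π := h2.sub (memLp_const μt)
    have hcovf : ∀ i j, (∫ q, (q.1 - μ) i * (q.1 - μ) j ∂π) = S i j := by
      intro i j
      simp_rw [hsubc]
      exact hcovπ i j
    have hcovg : ∀ i j, (∫ q, (q.2 - μt) i * (q.2 - μt) j ∂π) = St i j := by
      intro i j
      have := hcov i j
      rw [← hmap, MeasureTheory.integral_map measurable_snd.aemeasurable] at this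
      · simp_rw [hsubc]
        exact this
      · refine Continuous.aestronglyMeasurable ?_
        exact (((EuclideanSpace.proj (𝕜 := ℝ) i).continuous).sub continuous_const).mul
          (((EuclideanSpace.proj (𝕜 := ℝ) j).continuous).sub continuous_const)
    have hmf : ∀ i, (∫ q, (q.1 - μ) i ∂π) = 0 := by
      intro i
      simp_rw [hsubc]
      have hco : (∫ q, q.1 i ∂π) = μ i := by
        have h := (EuclideanSpace.proj (𝕜 := ℝ) i).integral_comp_comm (h1.integrable one_le_two)
        rw [hmeanπ] at h
        exact h
      rw [integral_sub ((memL2_coord h1 i).integrable one_le_two) (integrable_const _), hco,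
        integral_const]
      simp [measure_univ]
    have hmg : ∀ i, (∫ q, (q.2 - μt) i ∂π) = 0 := by
      intro i
      simp_rw [hsubc]
      have hco : (∫ q, q.2 i ∂π) = μt i := by
        have h := hcoordy i
        rw [← hmap, MeasureTheory.integral_map measurable_snd.aemeasurable] at h
        · exact h
        · exact (EuclideanSpace.proj (𝕜 := ℝ) i).continuous.aestronglyMeasurable
      rw [integral_sub ((memL2_coord h2 i).integrable one_le_two) (integrable_const _), hco,
        integral_const]
      simp [measure_univ]
    -- expansion of the cost
    set T : ℝ := ∑ i, ∫ q, (q.1 - μ) i * (q.2 - μt) i ∂π with hTdef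
    have htrS : S.trace = ∑ i, S i i := rfl
    have htrSt : St.trace = ∑ i, St i i := rfl
    have hexp : (∫ q, ‖q.1 - q.2‖ ^ 2 ∂π)
        = ‖μ - μt‖ ^ 2 + S.trace + St.trace - 2 * T := by
      have hptw : ∀ q : EuclideanSpace ℝ (Fin d) × EuclideanSpace ℝ (Fin d),
          ‖q.1 - q.2‖ ^ 2 = ∑ i, ((μ - μt) i + (q.1 - μ) i - (q.2 - μt) i) ^ 2 := by
        intro q
        rw [norm_sq_eq]
        refine Finset.sum_congr rfl fun i _ => ?_
        rw [hsubc, hsubc, hsubc, hsubc]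
        ring
      simp_rw [hptw]
      have hintsq : ∀ i : Fin d, Integrable
          (fun q : EuclideanSpace ℝ (Fin d) × EuclideanSpace ℝ (Fin d) =>
            ((μ - μt) i + (q.1 - μ) i - (q.2 - μt) i) ^ 2) π := by
        intro i
        have hm : MemLp (fun q : EuclideanSpace ℝ (Fin d) × EuclideanSpace ℝ (Fin d) =>
            (μ - μt) i + (q.1 - μ) i - (q.2 - μt) i) 2 π :=
          ((memLp_const ((μ - μt) i)).add (memL2_coord hf i)).sub (memL2_coord hg i)
        have := integrable_mul_L2 hm hm
        simpa [pow_two] using this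
      rw [integral_finset_sum _ (fun i _ => hintsq i)]
      have hone : ∀ i : Fin d, (∫ q, ((μ - μt) i + (q.1 - μ) i - (q.2 - μt) i) ^ 2 ∂π)
          = ((μ - μt) i) ^ 2 + (∫ q, (q.1 - μ) i * (q.1 - μ) i ∂π)
            + (∫ q, (q.2 - μt) i * (q.2 - μt) i ∂π)
            - 2 * ∫ q, (q.1 - μ) i * (q.2 - μt) i ∂π :=
        fun i => expand_one (memL2_coord hf i) (memL2_coord hg i) _ (hmf i) (hmg i)
      simp_rw [hone, hcovf, hcovg]
      rw [Finset.sum_sub_distrib, Finset.sum_add_distrib, Finset.sum_add_distrib,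
        ← Finset.mul_sum, ← norm_sq_eq, htrS, htrSt]
    -- the key trace inequality
    have hTle : T ≤ (psdSqrt (psdSqrt St * S * psdSqrt St)).trace := by
      refine le_of_forall_pos_le_add fun ε hε => ?_
      have hd1 : (0:ℝ) < (d:ℝ) + 1 := by positivity
      obtain ⟨X, hX, hXtr⟩ := trace_eps_bound hS hSt
        (show (0:ℝ) < 2 * ε / ((d:ℝ) + 1) by positivity)
      set R := psdSqrt X with hRdef
      have hXpsd := hX.posSemidef
      have hR : R.PosDef := psdSqrt_posDef hX
      have hRT : Rᵀ = R := psdSqrt_transpose hXpsd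
      have hRR : R * R = X := psdSqrt_mul_self hXpsd
      have hRdet : IsUnit R.det := isUnit_iff_ne_zero.mpr hR.det_pos.ne'
      have hRinv : R * R⁻¹ = 1 := Matrix.mul_nonsing_inv _ hRdet
      have hRinvT : (R⁻¹)ᵀ = R⁻¹ := by rw [Matrix.transpose_nonsing_inv, hRT]
      have hXinv : R⁻¹ * R⁻¹ = X⁻¹ := by rw [← hRR, Matrix.mul_inv_rev]
      -- pointwise bound
      have hpw : ∀ q : EuclideanSpace ℝ (Fin d) × EuclideanSpace ℝ (Fin d),
          2 * ∑ i, (q.1 - μ) i * (q.2 - μt) i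
            ≤ (∑ i, (∑ k, R i k * (q.1 - μ) k) ^ 2)
              + (∑ i, (∑ k, R⁻¹ i k * (q.2 - μt) k) ^ 2) := by
        intro q
        have hdc := dot_conj R hRT hRinv (fun k => (q.1 - μ) k) (fun k => (q.2 - μt) k)
        calc 2 * ∑ i, (q.1 - μ) i * (q.2 - μt) i
            = ∑ i, 2 * ((∑ k, R i k * (q.1 - μ) k) * (∑ k, R⁻¹ i k * (q.2 - μt) k)) := by
              rw [← hdc, Finset.mul_sum]
          _ ≤ ∑ i, ((∑ k, R i k * (q.1 - μ) k) ^ 2 + (∑ k, R⁻¹ i k * (q.2 - μt) k) ^ 2) :=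
              Finset.sum_le_sum fun i _ => by
                rw [← mul_assoc]
                exact two_mul_le_add_sq _ _
          _ = _ := Finset.sum_add_distrib
      -- integrability
      have hintT : ∀ i : Fin d, Integrable
          (fun q : EuclideanSpace ℝ (Fin d) × EuclideanSpace ℝ (Fin d) =>
            (q.1 - μ) i * (q.2 - μt) i) π :=
        fun i => integrable_mul_L2 (memL2_coord hf i) (memL2_coord hg i)
      have hsq1 : ∀ i : Fin d, Integrable
          (fun q : EuclideanSpace ℝ (Fin d) × EuclideanSpace ℝ (Fin d) =>
            (∑ k, R i k * (q.1 - μ) k) ^ 2) π := by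
        intro i
        have := integrable_mul_L2 (memL2_sumcomb hf (R i)) (memL2_sumcomb hf (R i))
        simpa [pow_two] using this
      have hsq2 : ∀ i : Fin d, Integrable
          (fun q : EuclideanSpace ℝ (Fin d) × EuclideanSpace ℝ (Fin d) =>
            (∑ k, R⁻¹ i k * (q.2 - μt) k) ^ 2) π := by
        intro i
        have := integrable_mul_L2 (memL2_sumcomb hg (R⁻¹ i)) (memL2_sumcomb hg (R⁻¹ i))
        simpa [pow_two] using this
      have hint1 : Integrable
          (fun q : EuclideanSpace ℝ (Fin d) × EuclideanSpace ℝ (Fin d) =>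
            2 * ∑ i, (q.1 - μ) i * (q.2 - μt) i) π :=
        (integrable_finset_sum _ fun i _ => hintT i).const_mul 2
      have hint2 : Integrable
          (fun q : EuclideanSpace ℝ (Fin d) × EuclideanSpace ℝ (Fin d) =>
            (∑ i, (∑ k, R i k * (q.1 - μ) k) ^ 2)
              + (∑ i, (∑ k, R⁻¹ i k * (q.2 - μt) k) ^ 2)) π :=
        (integrable_finset_sum _ fun i _ => hsq1 i).add
          (integrable_finset_sum _ fun i _ => hsq2 i)
      have hmono := integral_mono hint1 hint2 hpw
      -- evaluate both integrals
      have hL : (∫ q, 2 * ∑ i, (q.1 - μ) i * (q.2 - μt) i ∂π) = 2 * T := by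
        rw [MeasureTheory.integral_const_mul,
          integral_finset_sum _ (fun i _ => hintT i)]
      have e1 : (∑ i, ∫ q, (∑ k, R i k * (q.1 - μ) k) ^ 2 ∂π) = (X * S).trace := by
        have h := sum_int_comb hf hcovf R
        have hh : (∑ i, ∫ q, (∑ k, R i k * (q.1 - μ) k) ^ 2 ∂π)
            = ∑ i, ∫ q, (∑ k, R i k * (q.1 - μ) k) * (∑ k, R i k * (q.1 - μ) k) ∂π := by
          refine Finset.sum_congr rfl fun i _ => ?_
          congr 1
          funext q
          rw [pow_two]
        rw [hh, h, hRT]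
        rw [Matrix.trace_mul_cycle, hRR]
      have e2 : (∑ i, ∫ q, (∑ k, R⁻¹ i k * (q.2 - μt) k) ^ 2 ∂π) = (X⁻¹ * St).trace := by
        have h := sum_int_comb hg hcovg R⁻¹
        have hh : (∑ i, ∫ q, (∑ k, R⁻¹ i k * (q.2 - μt) k) ^ 2 ∂π)
            = ∑ i, ∫ q, (∑ k, R⁻¹ i k * (q.2 - μt) k) * (∑ k, R⁻¹ i k * (q.2 - μt) k) ∂π := by
          refine Finset.sum_congr rfl fun i _ => ?_
          congr 1
          funext q
          rw [pow_two]
        rw [hh, h, hRinvT]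
        rw [Matrix.trace_mul_cycle, hXinv]
      have hRint : (∫ q, (∑ i, (∑ k, R i k * (q.1 - μ) k) ^ 2)
            + (∑ i, (∑ k, R⁻¹ i k * (q.2 - μt) k) ^ 2) ∂π)
          = (X * S).trace + (X⁻¹ * St).trace := by
        rw [integral_add (integrable_finset_sum _ fun i _ => hsq1 i)
          (integrable_finset_sum _ fun i _ => hsq2 i),
          integral_finset_sum _ (fun i _ => hsq1 i), integral_finset_sum _ (fun i _ => hsq2 i),
          e1, e2]
      rw [hL, hRint] at hmono
      have hdd : 2 * ε / ((d:ℝ) + 1) * (d:ℝ) ≤ 2 * ε := by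
        rw [div_mul_eq_mul_div, div_le_iff₀ hd1]
        nlinarith [Nat.cast_nonneg (α := ℝ) d, hε]
      linarith
    rw [hexp]
    linarith
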